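/- Let V be a finite-dimensional vector space over 𝔽₂ and C̄ : V × V → ℤ/2ℤ a symmetric bilinear form. Let δ : ℤ/2ℤ → ℤ/4ℤ be the unique injective group homomorphism. Then there exists a function κ : V → ℤ/4ℤ (a tetractor) satisfying κ(v₁+v₂) - κ(v₁) - κ(v₂) = δ(C̄(v₁,v₂)) for all v₁, v₂ ∈ V. -/

import Mathlib

private def Lf : ZMod 2 → ZMod 4 := fun z => ((z.val : ℕ) : ZMod 4)

private def cf {n : ℕ} (d : Fin n → Fin n → ZMod 2) (δ : ZMod 2 →+ ZMod 4) :
    Fin n → Fin n → ZMod 4 :=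
  fun i j => if i < j then δ (d i j) else if i = j then Lf (d i i) else 0

private lemma tetractor_aux {n : ℕ} (d : Fin n → Fin n → ZMod 2)
    (hd : ∀ i j, d i j = d j i) (δ : ZMod 2 →+ ZMod 4) (hδ1 : δ 1 = 2) :
    ∃ κ : (Fin n → ZMod 2) → ZMod 4,
      ∀ x y : Fin n → ZMod 2,
        κ (x + y) - κ x - κ y = δ (∑ i, ∑ j, x i * y j * d i j) := by
  classical
  have key : ∀ z : ZMod 2, δ z = 2 * Lf z := by
    have h01 : ∀ z : ZMod 2, z = 0 ∨ z = 1 := by decide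
    intro z
    rcases h01 z with h | h
    · rw [h, map_zero]; decide
    · rw [h, hδ1]; decide
  have hLadd : ∀ x y : ZMod 2, Lf (x + y) = Lf x + Lf y - 2 * (Lf x * Lf y) := by decide
  have hLmul : ∀ x y : ZMod 2, Lf (x * y) = Lf x * Lf y := by decide
  have hterm : ∀ x y z : ZMod 2, δ (x * y * z) = Lf x * Lf y * δ z := by
    intro x y z
    rw [key, key z, hLmul, hLmul]
    ring
  refine ⟨fun x => ∑ i, ∑ j, cf d δ i j * (Lf (x i) * Lf (x j)), fun x y => ?_⟩
  have hδsum : δ (∑ i, ∑ j, x i * y j * d i j)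
      = ∑ i, ∑ j, Lf (x i) * Lf (y j) * δ (d i j) := by
    rw [map_sum]
    exact Finset.sum_congr rfl fun i _ => by
      rw [map_sum]; exact Finset.sum_congr rfl fun j _ => hterm _ _ _
  rw [hδsum, ← sub_eq_zero]
  have hre : (∑ i, ∑ j, cf d δ i j * (Lf ((x + y) i) * Lf ((x + y) j)))
      - (∑ i, ∑ j, cf d δ i j * (Lf (x i) * Lf (x j)))
      - (∑ i, ∑ j, cf d δ i j * (Lf (y i) * Lf (y j)))
      - (∑ i, ∑ j, Lf (x i) * Lf (y j) * δ (d i j))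
      = ∑ p : Fin n × Fin n,
          (cf d δ p.1 p.2 * (Lf (x p.1 + y p.1) * Lf (x p.2 + y p.2))
            - cf d δ p.1 p.2 * (Lf (x p.1) * Lf (x p.2))
            - cf d δ p.1 p.2 * (Lf (y p.1) * Lf (y p.2))
            - Lf (x p.1) * Lf (y p.2) * δ (d p.1 p.2)) := by
    rw [Fintype.sum_prod_type]
    simp only [Finset.sum_sub_distrib, Pi.add_apply]
  rw [hre]
  -- the summand, as a function of the pair
  set F : Fin n × Fin n → ZMod 4 := fun p =>
    cf d δ p.1 p.2 * (Lf (x p.1 + y p.1) * Lf (x p.2 + y p.2))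
      - cf d δ p.1 p.2 * (Lf (x p.1) * Lf (x p.2))
      - cf d δ p.1 p.2 * (Lf (y p.1) * Lf (y p.2))
      - Lf (x p.1) * Lf (y p.2) * δ (d p.1 p.2) with hF
  have hdiag : ∀ i : Fin n, F (i, i) = 0 := by
    intro i
    simp only [hF, cf, lt_irrefl, if_false, if_pos rfl, if_neg (lt_irrefl i), key,
      hLadd]
    generalize Lf (x i) = a
    generalize Lf (y i) = b
    generalize Lf (d i i) = e
    revert a b e
    decide
  have hswap : ∀ p : Fin n × Fin n, F p + F p.swap = 0 := by
    rintro ⟨i, j⟩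
    rcases lt_trichotomy i j with hlt | heq | hgt
    · have h1 : ¬ j < i := asymm hlt
      have h2 : j ≠ i := (ne_of_lt hlt).symm
      simp only [hF, Prod.swap_prod_mk, cf, if_pos hlt, if_neg h1, if_neg h2, hd j i,
        key, hLadd]
      generalize Lf (x i) = a
      generalize Lf (y i) = b
      generalize Lf (x j) = u
      generalize Lf (y j) = t
      generalize Lf (d i j) = e
      revert a b u t e
      decide
    · subst heq
      rw [Prod.swap_prod_mk, hdiag i, add_zero]
    · have h1 : ¬ i < j := asymm hgt
      have h2 : i ≠ j := (ne_of_lt hgt).symm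
      simp only [hF, Prod.swap_prod_mk, cf, if_pos hgt, if_neg h1, if_neg h2, hd i j,
        key, hLadd]
      generalize Lf (x i) = a
      generalize Lf (y i) = b
      generalize Lf (x j) = u
      generalize Lf (y j) = t
      generalize Lf (d j i) = e
      revert a b u t e
      decide
  refine Finset.sum_involution (fun p _ => p.swap) (fun p _ => hswap p) ?_
    (fun p _ => Finset.mem_univ _) (fun p _ => Prod.swap_swap p)
  rintro ⟨a, b⟩ _ hne h
  apply hne
  have hab : a = b := by
    have := congrArg Prod.snd h
    simpa using this
  subst hab
  exact hdiag a

/-- For a symmetric bilinear form `C̄ : V × V → ℤ/2ℤ` on a finite-dimensional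
`𝔽₂`-vector space `V`, and `δ : ℤ/2ℤ → ℤ/4ℤ` the injective homomorphism, there exists a
tetractor `κ : V → ℤ/4ℤ` with `κ(v₁+v₂) - κ(v₁) - κ(v₂) = δ(C̄(v₁,v₂))`. -/
theorem exists_tetractor
    {V : Type*} [AddCommGroup V] [Module (ZMod 2) V] [FiniteDimensional (ZMod 2) V]
    (Cb : V → V → ZMod 2)
    (hsymm : ∀ v w : V, Cb v w = Cb w v)
    (hadd₁ : ∀ v₁ v₂ w : V, Cb (v₁ + v₂) w = Cb v₁ w + Cb v₂ w)
    (hadd₂ : ∀ v w₁ w₂ : V, Cb v (w₁ + w₂) = Cb v w₁ + Cb v w₂)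
    (δ : ZMod 2 →+ ZMod 4) (hδ : Function.Injective δ) :
    ∃ κ : V → ZMod 4, ∀ v₁ v₂ : V, κ (v₁ + v₂) - κ v₁ - κ v₂ = δ (Cb v₁ v₂) := by
  classical
  -- δ 1 = 2
  have hδ1 : δ 1 = 2 := by
    have h2 : δ 1 + δ 1 = 0 := by
      rw [← map_add, show (1 + 1 : ZMod 2) = 0 by decide, map_zero]
    have h12 : δ 1 = 0 ∨ δ 1 = 2 := by
      revert h2; generalize δ 1 = u; revert u; decide
    rcases h12 with h | h
    · exact absurd (hδ (h.trans (map_zero δ).symm)) (by decide)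
    · exact h
  -- zero and smul lemmas for Cb
  have h0₁ : ∀ w : V, Cb 0 w = 0 := by
    intro w
    have h := hadd₁ 0 0 w
    rw [add_zero] at h
    exact (left_eq_add.mp h)
  have h0₂ : ∀ v : V, Cb v 0 = 0 := by
    intro v; rw [hsymm]; exact h0₁ v
  have h01 : ∀ z : ZMod 2, z = 0 ∨ z = 1 := by decide
  have hsmul₁ : ∀ (r : ZMod 2) (u w : V), Cb (r • u) w = r * Cb u w := by
    intro r u w
    rcases h01 r with h | h
    · rw [h, zero_smul, zero_mul]; exact h0₁ w
    · rw [h, one_smul, one_mul]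
  have hsmul₂ : ∀ (r : ZMod 2) (v u : V), Cb v (r • u) = r * Cb v u := by
    intro r v u
    rw [hsymm, hsmul₁, hsymm]
  -- basis
  set n := Module.finrank (ZMod 2) V with hn
  let b : Module.Basis (Fin n) (ZMod 2) V := Module.finBasis (ZMod 2) V
  have hsum₁ : ∀ (f : Fin n → V) (w : V),
      Cb (∑ i, f i) w = ∑ i, Cb (f i) w := fun f w =>
    map_sum (AddMonoidHom.mk' (fun v => Cb v w) (fun a c => hadd₁ a c w)) f Finset.univ
  have hsum₂ : ∀ (v : V) (f : Fin n → V),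
      Cb v (∑ i, f i) = ∑ i, Cb v (f i) := fun v f =>
    map_sum (AddMonoidHom.mk' (fun w => Cb v w) (fun a c => hadd₂ v a c)) f Finset.univ
  have hexp : ∀ v w : V,
      Cb v w = ∑ i, ∑ j, (b.repr v) i * (b.repr w) j * Cb (b i) (b j) := by
    intro v w
    conv_lhs => rw [← b.sum_repr v]
    rw [hsum₁]
    refine Finset.sum_congr rfl fun i _ => ?_
    rw [hsmul₁]
    conv_lhs => rw [← b.sum_repr w]
    rw [hsum₂, Finset.mul_sum]
    refine Finset.sum_congr rfl fun j _ => ?_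
    rw [hsmul₂]
    ring
  obtain ⟨κ₀, hκ₀⟩ := tetractor_aux (fun i j => Cb (b i) (b j))
    (fun i j => hsymm (b i) (b j)) δ hδ1
  refine ⟨fun v => κ₀ (fun i => (b.repr v) i), fun v w => ?_⟩
  have hadd : (fun i => (b.repr (v + w)) i)
      = (fun i => (b.repr v) i) + (fun i => (b.repr w) i) := by
    funext i
    simp [map_add]
  show κ₀ (fun i => (b.repr (v + w)) i) - κ₀ (fun i => (b.repr v) i)
      - κ₀ (fun i => (b.repr w) i) = δ (Cb v w)
  rw [hadd, hκ₀, hexp v w]
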